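/- Fix a nonzero vector x ∈ R^d, an integer r ≥ 1, and ε ∈ (0,1). Let A be an r×d random matrix with independent N(0,1) entries. Then the probability that |‖Ax‖² / r − ‖x‖²| > ε·‖x‖² is at most 2·exp(−r·(ε²/4 − ε³/6)). -/

import Mathlib

open MeasureTheory ProbabilityTheory

open Real
open scoped ENNReal
set_option maxHeartbeats 1000000

/-- The Euclidean norm of a vector in `ℝ^m`. -/
noncomputable def euclNorm {m : Type*} [Fintype m] (v : m → ℝ) : ℝ :=
  Real.sqrt (∑ i, v i ^ 2)

/-- The product of an `r × d` matrix with a vector in `ℝ^d`. -/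
def matVec {r d : ℕ} (A : Fin r → Fin d → ℝ) (v : Fin d → ℝ) : Fin r → ℝ :=
  fun k => ∑ l, A k l * v l

-- Lemma A: 1-d quadratic-exponential gaussian integral
lemma lintA (t u b : ℝ) (h : 2*t*u^2 < 1) :
    ∫⁻ a, ENNReal.ofReal (rexp (t*(b+u*a)^2)) ∂(gaussianReal 0 1)
      = ENNReal.ofReal ((Real.sqrt (1-2*t*u^2))⁻¹ * rexp (t*b^2/(1-2*t*u^2))) := by
  set α : ℝ := 1/2 - t*u^2 with hα
  have hαpos : 0 < α := by simp only [hα]; nlinarith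
  have h2α : 1 - 2*t*u^2 = 2*α := by rw [hα]; ring
  set m : ℝ := t*u*b/α with hm
  have hv : (1 : NNReal) ≠ 0 := one_ne_zero
  rw [gaussianReal_of_var_ne_zero 0 hv,
    lintegral_withDensity_eq_lintegral_mul _ (measurable_gaussianPDF 0 1) (by fun_prop)]
  have hpt : ∀ a : ℝ, (gaussianPDF 0 1 * fun a => ENNReal.ofReal (rexp (t*(b+u*a)^2))) a
      = ENNReal.ofReal ((Real.sqrt (2*π))⁻¹ * rexp (t*b^2/(2*α)) * rexp (-α*(a - m)^2)) := by
    intro a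
    simp only [Pi.mul_apply, gaussianPDF, gaussianPDFReal]
    rw [← ENNReal.ofReal_mul (by positivity)]
    congr 1
    push_cast
    rw [mul_one, mul_assoc, mul_assoc, ← Real.exp_add, ← Real.exp_add]
    have hne' : (1/2 - t*u^2 : ℝ) ≠ 0 := by rw [← hα]; exact hαpos.ne'
    have hne2 : (1 - 2*t*u^2 : ℝ) ≠ 0 := by nlinarith
    have hne : α ≠ 0 := hαpos.ne'
    congr 2
    rw [hm]
    field_simp
    rw [hα]
    ring
  simp only [hpt]
  rw [← ofReal_integral_eq_lintegral_ofReal]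
  · rw [integral_const_mul, integral_sub_right_eq_self (fun y => rexp (-α*y^2)) m,
      integral_gaussian]
    congr 1
    rw [h2α]
    rw [show √(π/α) = √((2*π)) * (√(2*α))⁻¹ by
      rw [← Real.sqrt_inv, ← Real.sqrt_mul (by positivity)]
      congr 1
      field_simp]
    have h1 : (0:ℝ) < √(2*π) := by positivity
    field_simp
  · exact ((integrable_exp_neg_mul_sq hαpos).comp_sub_right m).const_mul _
  · exact Filter.Eventually.of_forall fun a => by positivity

lemma lintB (n : ℕ) (x : Fin n → ℝ) (t b : ℝ) (h : 2*t*(∑ l, (x l)^2) < 1) :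
    ∫⁻ a : Fin n → ℝ, ENNReal.ofReal (rexp (t*(b + ∑ l, x l * a l)^2))
        ∂(Measure.pi fun _ => gaussianReal 0 1)
      = ENNReal.ofReal ((Real.sqrt (1 - 2*t*(∑ l, (x l)^2)))⁻¹
          * rexp (t*b^2/(1 - 2*t*(∑ l, (x l)^2)))) := by
  induction n generalizing b with
  | zero =>
      simp only [Finset.univ_eq_empty, Finset.sum_empty, add_zero, mul_zero, sub_zero,
        Real.sqrt_one, inv_one, one_mul, div_one]
      rw [lintegral_const]
      simp [measure_univ]
  | succ n ih =>
      set s' : ℝ := ∑ l : Fin n, (x l.succ)^2 with hs'def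
      have hs'0 : 0 ≤ s' := Finset.sum_nonneg fun _ _ => sq_nonneg _
      have hsum : ∑ l : Fin (n+1), (x l)^2 = x 0^2 + s' := Fin.sum_univ_succ _
      rw [hsum] at h ⊢
      have hD' : 0 < 1 - 2*t*s' := by
        rcases le_or_gt 0 t with ht|ht
        · nlinarith [mul_nonneg ht (sq_nonneg (x 0))]
        · nlinarith
      have hD : 0 < 1 - 2*t*(x 0^2 + s') := by linarith
      set g : ℝ × (Fin n → ℝ) → ℝ≥0∞ :=
        fun p => ENNReal.ofReal (rexp (t*((b + x 0 * p.1) + ∑ l, x l.succ * p.2 l)^2)) with hg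
      have hgm : Measurable g := by fun_prop
      have mp := measurePreserving_piFinSuccAbove (fun _ : Fin (n+1) => gaussianReal 0 1) 0
      have hfe : (fun a : Fin (n+1) → ℝ => ENNReal.ofReal (rexp (t*(b + ∑ l, x l * a l)^2)))
          = fun a => g ((MeasurableEquiv.piFinSuccAbove (fun _ => ℝ) 0) a) := by
        funext a
        simp [hg, MeasurableEquiv.piFinSuccAbove, Fin.insertNthEquiv, Fin.removeNth,
          Fin.zero_succAbove, Fin.sum_univ_succ, add_assoc, Fin.tail]
      rw [hfe, mp.lintegral_comp hgm, lintegral_prod _ hgm.aemeasurable]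
      have hinner : ∀ y : ℝ, (∫⁻ z : Fin n → ℝ, g (y, z)
            ∂(Measure.pi fun _ => gaussianReal 0 1))
          = ENNReal.ofReal ((Real.sqrt (1-2*t*s'))⁻¹)
              * ENNReal.ofReal (rexp ((t/(1-2*t*s'))*(b + x 0 * y)^2)) := by
        intro y
        rw [ih (fun l => x l.succ) (b + x 0 * y) (by linarith)]
        rw [← ENNReal.ofReal_mul (by positivity)]
        congr 2
        field_simp
        simp only [hs'def]
      simp only [hinner]
      rw [lintegral_const_mul' _ _ ENNReal.ofReal_ne_top,
        lintA (t/(1-2*t*s')) (x 0) b (by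
          have e1 : 2*(t/(1-2*t*s'))*(x 0)^2 = (2*t*(x 0)^2)/(1-2*t*s') := by ring
          rw [e1, div_lt_one hD']
          linarith)]
      rw [← ENNReal.ofReal_mul (by positivity)]
      have key1 : 1 - 2*(t/(1-2*t*s'))*(x 0)^2 = (1 - 2*t*(x 0^2 + s'))/(1-2*t*s') := by
        field_simp
        ring
      have hsD : (0:ℝ) < Real.sqrt (1-2*t*s') := Real.sqrt_pos.mpr hD'
      have hsDD : (0:ℝ) < Real.sqrt (1 - 2*t*(x 0^2 + s')) := Real.sqrt_pos.mpr hD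
      congr 1
      rw [key1, Real.sqrt_div hD.le,
        show t/(1-2*t*s')*b^2/((1 - 2*t*(x 0^2 + s'))/(1-2*t*s'))
            = t*b^2/(1 - 2*t*(x 0^2 + s')) from by
            field_simp [hD'.ne', hD.ne']
            rw [div_eq_div_iff (mul_ne_zero (ne_of_gt (by linarith)) (ne_of_gt (by linarith))) (ne_of_gt (by linarith))]
            ring,
        inv_div, ← mul_assoc,
        show (√(1-2*t*s'))⁻¹ * (√(1-2*t*s')/√(1 - 2*t*(x 0^2 + s'))) =
            (√(1 - 2*t*(x 0^2 + s')))⁻¹ from by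
          rw [div_eq_mul_inv, ← mul_assoc, inv_mul_cancel₀ hsD.ne', one_mul]]

lemma lintC (d r : ℕ) (x : Fin d → ℝ) (t : ℝ) (h : 2*t*(∑ l, (x l)^2) < 1) :
    ∫⁻ A : Fin r → Fin d → ℝ, ENNReal.ofReal (rexp (t * ∑ k, (∑ l, x l * A k l)^2))
        ∂(Measure.pi fun _ => Measure.pi fun _ => gaussianReal 0 1)
      = ENNReal.ofReal ((Real.sqrt (1 - 2*t*(∑ l, (x l)^2)))⁻¹) ^ r := by
  induction r with
  | zero => simp
  | succ r ih =>
      set g : (Fin d → ℝ) × (Fin r → Fin d → ℝ) → ℝ≥0∞ :=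
        fun p => ENNReal.ofReal (rexp (t*(0 + ∑ l, x l * p.1 l)^2))
          * ENNReal.ofReal (rexp (t * ∑ k, (∑ l, x l * p.2 k l)^2)) with hg
      have hgm : Measurable g := by fun_prop
      have mp := measurePreserving_piFinSuccAbove
        (fun _ : Fin (r+1) => Measure.pi fun _ : Fin d => gaussianReal 0 1) 0
      have hfe : (fun A : Fin (r+1) → Fin d → ℝ =>
            ENNReal.ofReal (rexp (t * ∑ k, (∑ l, x l * A k l)^2)))
          = fun A => g ((MeasurableEquiv.piFinSuccAbove (fun _ => Fin d → ℝ) 0) A) := by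
        funext A
        simp [hg, MeasurableEquiv.piFinSuccAbove, Fin.insertNthEquiv, Fin.removeNth,
          Fin.zero_succAbove, Fin.sum_univ_succ, Fin.tail, mul_add, Real.exp_add]
        rw [ENNReal.ofReal_mul (Real.exp_nonneg _)]
      rw [hfe, mp.lintegral_comp hgm, lintegral_prod _ hgm.aemeasurable]
      have hinner : ∀ y : Fin d → ℝ, (∫⁻ z : Fin r → Fin d → ℝ, g (y, z)
            ∂(Measure.pi fun _ => Measure.pi fun _ => gaussianReal 0 1))
          = ENNReal.ofReal (rexp (t*(0 + ∑ l, x l * y l)^2))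
              * ENNReal.ofReal ((Real.sqrt (1 - 2*t*(∑ l, (x l)^2)))⁻¹) ^ r := by
        intro y
        rw [hg]
        simp only
        rw [lintegral_const_mul' _ _ ENNReal.ofReal_ne_top, ih]
      simp only [hinner]
      rw [lintegral_mul_const' _ _ (by exact (ENNReal.pow_ne_top ENNReal.ofReal_ne_top)),
        lintB d x t 0 h]
      rw [show t * (0:ℝ)^2 / (1 - 2*t*(∑ l, (x l)^2)) = 0 by ring, Real.exp_zero, mul_one,
        pow_succ]
      ring

lemma chern (d r : ℕ) (x : Fin d → ℝ) (t a : ℝ) (h : 2*t*(∑ l, (x l)^2) < 1)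
    (E : Set (Fin r → Fin d → ℝ))
    (hE : ∀ A ∈ E, t*a ≤ t * ∑ k, (∑ l, x l * A k l)^2) :
    (Measure.pi fun _ : Fin r => Measure.pi fun _ : Fin d => gaussianReal 0 1) E ≤
      ENNReal.ofReal (rexp (-(t*a)) * ((Real.sqrt (1 - 2*t*(∑ l, (x l)^2)))⁻¹)^r) := by
  set μ := (Measure.pi fun _ : Fin r => Measure.pi fun _ : Fin d => gaussianReal 0 1) with hμ
  set f : (Fin r → Fin d → ℝ) → ℝ≥0∞ :=
    fun A => ENNReal.ofReal (rexp (t * ∑ k, (∑ l, x l * A k l)^2)) with hf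
  have hfm : Measurable f := by fun_prop
  set c : ℝ≥0∞ := ENNReal.ofReal (rexp (t*a)) with hc
  have hc0 : c ≠ 0 := (ENNReal.ofReal_pos.mpr (Real.exp_pos _)).ne'
  have h1 : μ E ≤ μ {A | c ≤ f A} := by
    apply measure_mono
    intro A hA
    exact ENNReal.ofReal_le_ofReal (Real.exp_le_exp.2 (hE A hA))
  have h2 : c * μ {A | c ≤ f A} ≤ ∫⁻ A, f A ∂μ :=
    mul_meas_ge_le_lintegral₀ hfm.aemeasurable c
  have h3 : ∫⁻ A, f A ∂μ = ENNReal.ofReal ((Real.sqrt (1 - 2*t*(∑ l, (x l)^2)))⁻¹) ^ r :=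
    lintC d r x t h
  have h4 : μ {A | c ≤ f A} ≤ c⁻¹ * (ENNReal.ofReal ((Real.sqrt (1 - 2*t*(∑ l, (x l)^2)))⁻¹) ^ r) := by
    rw [← h3]
    rw [show μ {A | c ≤ f A} = c⁻¹ * (c * μ {A | c ≤ f A}) by
      rw [← mul_assoc, ENNReal.inv_mul_cancel hc0 ENNReal.ofReal_ne_top, one_mul]]
    exact mul_le_mul_right h2 _
  refine (h1.trans h4).trans (le_of_eq ?_)
  rw [ENNReal.ofReal_mul (Real.exp_nonneg _), ← ENNReal.ofReal_pow (by positivity),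
    hc, ← ENNReal.ofReal_inv_of_pos (Real.exp_pos _), ← Real.exp_neg]

lemma log_one_add_le {y : ℝ} (hy : 0 ≤ y) : Real.log (1+y) ≤ y - y^2/2 + y^3/3 := by
  set f : ℝ → ℝ := fun z => z - z^2/2 + z^3/3 - Real.log (1+z) with hf
  have hd : ∀ z ∈ interior (Set.Ici (0:ℝ)), HasDerivAt f (1 - 2*z/2 + 3*z^2/3 - (1+z)⁻¹) z := by
    intro z hz
    rw [interior_Ici, Set.mem_Ioi] at hz
    have h1z : (0:ℝ) < 1 + z := by linarith
    have hlog : HasDerivAt (fun z : ℝ => Real.log (1+z)) (1+z)⁻¹ z := by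
      have := (Real.hasDerivAt_log h1z.ne').comp z ((hasDerivAt_id z).const_add 1)
      simpa [Function.comp_def] using this
    have h2 : HasDerivAt (fun z : ℝ => z^2) (2*z) z := by simpa using hasDerivAt_pow 2 z
    have h3 : HasDerivAt (fun z : ℝ => z^3) (3*z^2) z := by simpa using hasDerivAt_pow 3 z
    exact (((hasDerivAt_id z).sub (h2.div_const 2)).add (h3.div_const 3)).sub hlog
  have hcont : ContinuousOn f (Set.Ici 0) := by
    intro z hz
    rw [Set.mem_Ici] at hz
    have h1z : (1:ℝ) + z ≠ 0 := by linarith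
    have hl : ContinuousAt (fun z : ℝ => Real.log (1+z)) z :=
      (Real.continuousAt_log h1z).comp (by fun_prop)
    exact (ContinuousAt.sub (by fun_prop) hl).continuousWithinAt
  have hmono := monotoneOn_of_deriv_nonneg (convex_Ici 0) hcont
    (fun z hz => (hd z hz).differentiableAt.differentiableWithinAt)
    (fun z hz => by
      rw [(hd z hz).deriv]
      rw [interior_Ici, Set.mem_Ioi] at hz
      have h1z : (0:ℝ) < 1 + z := by linarith
      have : (1+z)⁻¹ ≤ 1 - 2*z/2 + 3*z^2/3 := by
        rw [inv_eq_one_div, div_le_iff₀ h1z]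
        nlinarith
      linarith)
  have h0 : f 0 = 0 := by simp [hf]
  have := hmono Set.self_mem_Ici (Set.mem_Ici.mpr hy) hy
  rw [h0] at this
  simp only [hf] at this
  linarith

lemma log_one_sub_le {y : ℝ} (hy : 0 ≤ y) (hy1 : y < 1) :
    Real.log (1-y) ≤ -y - y^2/2 := by
  set f : ℝ → ℝ := fun z => -z - z^2/2 - Real.log (1-z) with hf
  have hd : ∀ z ∈ interior (Set.Ico (0:ℝ) 1), HasDerivAt f (-1 - 2*z/2 - (-(1-z)⁻¹)) z := by
    intro z hz
    rw [interior_Ico, Set.mem_Ioo] at hz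
    have h1z : (0:ℝ) < 1 - z := by linarith
    have hlog : HasDerivAt (fun z : ℝ => Real.log (1-z)) (-(1-z)⁻¹) z := by
      have := (Real.hasDerivAt_log h1z.ne').comp z ((hasDerivAt_id z).const_sub 1)
      simpa [Function.comp_def] using this
    have h2 : HasDerivAt (fun z : ℝ => z^2) (2*z) z := by simpa using hasDerivAt_pow 2 z
    exact (((hasDerivAt_id z).neg).sub (h2.div_const 2)).sub hlog
  have hcont : ContinuousOn f (Set.Ico 0 1) := by
    intro z hz
    rw [Set.mem_Ico] at hz
    have h1z : (1:ℝ) - z ≠ 0 := by linarith [hz.2]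
    have hl : ContinuousAt (fun z : ℝ => Real.log (1-z)) z :=
      (Real.continuousAt_log h1z).comp (by fun_prop)
    exact (ContinuousAt.sub (by fun_prop) hl).continuousWithinAt
  have hmono := monotoneOn_of_deriv_nonneg (convex_Ico 0 1) hcont
    (fun z hz => (hd z hz).differentiableAt.differentiableWithinAt)
    (fun z hz => by
      rw [(hd z hz).deriv]
      rw [interior_Ico, Set.mem_Ioo] at hz
      have h1z : (0:ℝ) < 1 - z := by linarith [hz.2]
      have : 1 + 2*z/2 ≤ (1-z)⁻¹ := by
        rw [inv_eq_one_div, le_div_iff₀ h1z]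
        nlinarith
      linarith)
  have h0 : f 0 = 0 := by simp [hf]
  have := hmono (Set.mem_Ico.mpr ⟨le_refl 0, one_pos⟩) (Set.mem_Ico.mpr ⟨hy, hy1⟩) hy
  rw [h0] at this
  simp only [hf] at this
  linarith

/-- Single-vector norm concentration for Gaussian random projections: for a
fixed nonzero `x ∈ ℝ^d`, `r ≥ 1`, `ε ∈ (0,1)`, and an `r × d` random matrix
`A` with independent standard Gaussian `N(0,1)` entries, the probability that
`|‖Ax‖²/r − ‖x‖²| > ε·‖x‖²` is at most `2·exp(−r·(ε²/4 − ε³/6))`. -/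
theorem gaussian_projection_norm_concentration
    (d r : ℕ) (hr : 1 ≤ r) (x : Fin d → ℝ) (hx : x ≠ 0)
    (ε : ℝ) (hε0 : 0 < ε) (hε1 : ε < 1) :
    (Measure.pi fun _ : Fin r => Measure.pi fun _ : Fin d => gaussianReal 0 1)
      {A : Fin r → Fin d → ℝ |
        |euclNorm (matVec A x) ^ 2 / (r : ℝ) - euclNorm x ^ 2| >
          ε * euclNorm x ^ 2} ≤
      ENNReal.ofReal (2 * Real.exp (-(r : ℝ) * (ε ^ 2 / 4 - ε ^ 3 / 6))) := by
  set μ := (Measure.pi fun _ : Fin r => Measure.pi fun _ : Fin d => gaussianReal 0 1) with hμ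
  set s : ℝ := ∑ l, (x l)^2 with hs
  have hrpos : (0:ℝ) < r := by
    have : (1:ℝ) ≤ r := by exact_mod_cast hr
    linarith
  have hspos : 0 < s := by
    obtain ⟨l0, hl0⟩ := Function.ne_iff.mp hx
    exact Finset.sum_pos' (fun i _ => sq_nonneg _)
      ⟨l0, Finset.mem_univ _, by
        have h := sq_abs (x l0)
        nlinarith [abs_pos.mpr hl0, sq_abs (x l0), pow_pos (abs_pos.mpr hl0) 2]⟩
  have hES : euclNorm x ^ 2 = s := Real.sq_sqrt (by positivity)
  set X : (Fin r → Fin d → ℝ) → ℝ := fun A => ∑ k, (∑ l, x l * A k l)^2 with hX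
  have hXA : ∀ A, euclNorm (matVec A x) ^ 2 = X A := by
    intro A
    rw [euclNorm, Real.sq_sqrt (by positivity)]
    refine Finset.sum_congr rfl fun k _ => ?_
    congr 1
    exact Finset.sum_congr rfl fun l _ => mul_comm _ _
  have h1ε : (0:ℝ) < 1 + ε := by linarith
  have h1ε' : (0:ℝ) < 1 - ε := by linarith
  -- tail events
  set E1 : Set (Fin r → Fin d → ℝ) := {A | (r:ℝ)*s*(1+ε) ≤ X A} with hE1
  set E2 : Set (Fin r → Fin d → ℝ) := {A | X A ≤ (r:ℝ)*s*(1-ε)} with hE2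
  have hsub : {A : Fin r → Fin d → ℝ |
        |euclNorm (matVec A x) ^ 2 / (r : ℝ) - euclNorm x ^ 2| > ε * euclNorm x ^ 2}
      ⊆ E1 ∪ E2 := by
    intro A hA
    simp only [Set.mem_setOf_eq, hXA, hES, gt_iff_lt] at hA
    rcases lt_abs.mp hA with h | h
    · left
      have h2 : s + ε * s < X A / r := by linarith
      have := (lt_div_iff₀ hrpos).mp h2
      simp only [hE1, Set.mem_setOf_eq]
      nlinarith
    · right
      have h2 : X A / r < s - ε * s := by linarith
      have := (div_lt_iff₀ hrpos).mp h2
      simp only [hE2, Set.mem_setOf_eq]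
      nlinarith
  -- parameters
  set t1 : ℝ := ε/(2*s*(1+ε)) with ht1
  set t2 : ℝ := -(ε/(2*s*(1-ε))) with ht2
  have ht1pos : 0 < t1 := by positivity
  have ht2neg : t2 < 0 := by
    have : 0 < ε/(2*s*(1-ε)) := by positivity
    simp only [ht2]; linarith
  have h2t1s : 2*t1*s = ε/(1+ε) := by
    rw [ht1]; field_simp
  have h2t2s : 2*t2*s = -(ε/(1-ε)) := by
    rw [ht2]; field_simp
  have hcond1 : 2*t1*s < 1 := by
    rw [h2t1s, div_lt_one h1ε]; linarith
  have hcond2 : 2*t2*s < 1 := by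
    rw [h2t2s]
    have : 0 < ε/(1-ε) := by positivity
    linarith
  have hD1 : 1 - 2*t1*s = 1/(1+ε) := by
    rw [h2t1s]; field_simp; ring
  have hD2 : 1 - 2*t2*s = 1/(1-ε) := by
    rw [h2t2s]; field_simp; ring
  have hsqrt1 : (Real.sqrt (1 - 2*t1*s))⁻¹ = rexp (Real.log (1+ε) / 2) := by
    rw [hD1, one_div, Real.sqrt_inv, inv_inv, Real.exp_half, Real.exp_log h1ε]
  have hsqrt2 : (Real.sqrt (1 - 2*t2*s))⁻¹ = rexp (Real.log (1-ε) / 2) := by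
    rw [hD2, one_div, Real.sqrt_inv, inv_inv, Real.exp_half, Real.exp_log h1ε']
  have hta1 : t1 * ((r:ℝ)*s*(1+ε)) = (r:ℝ)*ε/2 := by
    rw [ht1]; field_simp
  have hta2 : t2 * ((r:ℝ)*s*(1-ε)) = -((r:ℝ)*ε/2) := by
    rw [ht2]; field_simp
  -- the two chern bounds
  have hb1 := chern d r x t1 ((r:ℝ)*s*(1+ε)) hcond1 E1
    (fun A hA => mul_le_mul_of_nonneg_left hA ht1pos.le)
  have hb2 := chern d r x t2 ((r:ℝ)*s*(1-ε)) hcond2 E2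
    (fun A hA => mul_le_mul_of_nonpos_left hA ht2neg.le)
  rw [← hs] at hb1 hb2
  rw [hta1, hsqrt1] at hb1
  rw [hta2, hsqrt2] at hb2
  -- real bounds
  have hlog1 := log_one_add_le hε0.le
  have hlog2 := log_one_sub_le hε0.le hε1
  have hreal1 : rexp (-((r:ℝ)*ε/2)) * (rexp (Real.log (1+ε) / 2))^r
      ≤ rexp (-(r:ℝ)*(ε^2/4 - ε^3/6)) := by
    rw [← Real.exp_nat_mul, ← Real.exp_add]
    apply Real.exp_le_exp.mpr
    nlinarith [mul_le_mul_of_nonneg_left hlog1 (by positivity : (0:ℝ) ≤ (r:ℝ)/2)]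
  have hreal2 : rexp (-(-((r:ℝ)*ε/2))) * (rexp (Real.log (1-ε) / 2))^r
      ≤ rexp (-(r:ℝ)*(ε^2/4 - ε^3/6)) := by
    rw [← Real.exp_nat_mul, ← Real.exp_add, neg_neg]
    apply Real.exp_le_exp.mpr
    nlinarith [mul_le_mul_of_nonneg_left hlog2 (by positivity : (0:ℝ) ≤ (r:ℝ)/2),
      mul_nonneg (mul_nonneg hrpos.le (pow_nonneg hε0.le 3)) (by norm_num : (0:ℝ) ≤ 1/6)]
  calc μ {A : Fin r → Fin d → ℝ |
        |euclNorm (matVec A x) ^ 2 / (r : ℝ) - euclNorm x ^ 2| > ε * euclNorm x ^ 2}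
      ≤ μ (E1 ∪ E2) := measure_mono hsub
    _ ≤ μ E1 + μ E2 := measure_union_le _ _
    _ ≤ ENNReal.ofReal (rexp (-(r:ℝ)*(ε^2/4 - ε^3/6)))
        + ENNReal.ofReal (rexp (-(r:ℝ)*(ε^2/4 - ε^3/6))) := by
        exact add_le_add (hb1.trans (ENNReal.ofReal_le_ofReal hreal1))
          (hb2.trans (ENNReal.ofReal_le_ofReal hreal2))
    _ = ENNReal.ofReal (2 * rexp (-(r:ℝ)*(ε^2/4 - ε^3/6))) := by
        rw [← ENNReal.ofReal_add (Real.exp_nonneg _) (Real.exp_nonneg _), two_mul]
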